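/- Let T be an AND-OR synthesis tree with value function V : M → ℝ in which every reaction node has a nonempty list of molecule children. Then the minimum of V_t(π) over all frontier positions π of T equals rn_V of the root of T, i.e. the frontier node selected by Retro* attains exactly the minimum total cost over all synthesis routes of the target. -/

import Mathlib

/-- AND-OR synthesis trees over a molecule type `M`: a molecule node is either a
frontier leaf carrying an element of `M`, or an internal node carrying a nonempty
list (encoded as head plus tail) of reaction children; a reaction node is a pair
of a real cost and a list of molecule children. -/
inductive Mol (M : Type) where
  | frontier : M → Mol M
  | node : (ℝ × List (Mol M)) → List (ℝ × List (Mol M)) → Mol M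

mutual
/-- Reaction number of a molecule node. -/
noncomputable def rn {M : Type} (V : M → ℝ) : Mol M → ℝ
  | .frontier m => V m
  | .node r rs => (rs.attach.map fun ⟨R, _⟩ => rnR V R).foldr min (rnR V r)
termination_by u => sizeOf u
decreasing_by
  · simp; omega
  · have := List.sizeOf_lt_of_mem ‹R ∈ rs›; simp; omega

/-- Reaction number of a reaction node. -/
noncomputable def rnR {M : Type} (V : M → ℝ) : ℝ × List (Mol M) → ℝ
  | (c, ms) => c + (ms.attach.map fun ⟨u, _⟩ => rn V u).sum
termination_by R => sizeOf R
decreasing_by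
  · have := List.sizeOf_lt_of_mem ‹u ∈ ms›; simp; omega
end

/-- A frontier position: a root-to-leaf path selecting, at each internal
molecule node, one reaction child and one molecule child of that reaction,
terminating at a frontier leaf. -/
inductive FPos {M : Type} : Mol M → Type
  | leaf (m : M) : FPos (.frontier m)
  | step {r rs} (i : Fin (r :: rs : List (ℝ × List (Mol M))).length)
      (j : Fin ((r :: rs).get i).2.length)
      (rest : FPos (((r :: rs).get i).2.get j)) :
      FPos (.node r rs)

/-- `Vt V π`: the sum of the costs of the reaction nodes on `π`, plus the sum of
`rn V` over the off-path molecule children of those reaction nodes, plus `V` of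
the molecule at the leaf of `π`. -/
noncomputable def Vt {M : Type} (V : M → ℝ) : {u : Mol M} → FPos u → ℝ
  | _, .leaf m => V m
  | _, .step (r := r) (rs := rs) i j rest =>
      ((r :: rs).get i).1
        + ∑ j' ∈ Finset.univ.erase j, rn V (((r :: rs).get i).2.get j')
        + Vt V rest

/-- Every reaction node occurring in the tree has a nonempty list of molecule
children. -/
inductive NonemptyRxns {M : Type} : Mol M → Prop
  | frontier (m : M) : NonemptyRxns (.frontier m)
  | node {r rs} :
      (∀ R ∈ (r :: rs : List (ℝ × List (Mol M))), R.2 ≠ []) →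
      (∀ R ∈ (r :: rs : List (ℝ × List (Mol M))), ∀ u ∈ R.2, NonemptyRxns u) →
      NonemptyRxns (.node r rs)

private lemma sumFinGet {α} (ms : List α) (f : α → ℝ) :
    ∑ i : Fin ms.length, f (ms.get i) = (ms.map f).sum := by
  rw [← List.sum_ofFn]
  congr 1
  conv_rhs => rw [← (List.ofFn_getElem : _ = ms)]
  rw [List.map_ofFn]
  rfl

private lemma foldrMin_le (a : ℝ) (l : List ℝ) : ∀ x ∈ a :: l, l.foldr min a ≤ x := by
  induction l with
  | nil => simp
  | cons b t ih =>
    intro x hx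
    simp only [List.foldr_cons]
    rcases List.mem_cons.1 hx with h | hx'
    · exact le_trans (min_le_right _ _) (ih x (by simp [h]))
    · rcases List.mem_cons.1 hx' with h | h
      · exact h ▸ min_le_left _ _
      · exact le_trans (min_le_right _ _) (ih x (by simp [h]))

private lemma foldrMin_mem (a : ℝ) (l : List ℝ) : l.foldr min a ∈ a :: l := by
  induction l with
  | nil => simp
  | cons b t ih =>
    simp only [List.foldr_cons]
    rcases min_choice b (t.foldr min a) with h | h <;> rw [h]
    · simp
    · rcases List.mem_cons.1 ih with h' | h' <;> simp [h']

private lemma rn_node {M : Type} (V : M → ℝ) (r : ℝ × List (Mol M)) (rs : List (ℝ × List (Mol M))) :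
    rn V (.node r rs) = (rs.map (rnR V)).foldr min (rnR V r) := by
  rw [rn]; simp

private lemma rnR_eq {M : Type} (V : M → ℝ) (R : ℝ × List (Mol M)) :
    rnR V R = R.1 + (R.2.map (rn V)).sum := by
  obtain ⟨c, ms⟩ := R; rw [rnR]; simp

private lemma sizeOf_child_lt {M : Type} (r : ℝ × List (Mol M)) (rs : List (ℝ × List (Mol M)))
    (R : ℝ × List (Mol M)) (hR : R ∈ (r :: rs : List _)) (u : Mol M) (hu : u ∈ R.2) :
    sizeOf u < sizeOf (Mol.node r rs) := by
  have h1 := List.sizeOf_lt_of_mem hu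
  obtain ⟨c, ms⟩ := R
  rcases List.mem_cons.1 hR with h | h
  · subst h; simp at h1 ⊢; omega
  · have h2 := List.sizeOf_lt_of_mem h
    simp at h1 h2 ⊢; omega

private lemma min_Vt_aux {M : Type} (V : M → ℝ) :
    ∀ (n : ℕ) (u : Mol M), sizeOf u ≤ n → NonemptyRxns u →
      IsLeast {x : ℝ | ∃ π : FPos u, Vt V π = x} (rn V u) := by
  intro n
  induction n with
  | zero =>
    intro u hs _
    cases u with
    | frontier m => simp at hs
    | node r rs => simp at hs
  | succ n ih =>
    intro u hs hne
    cases u with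
    | frontier m =>
      constructor
      · exact ⟨.leaf m, by simp [Vt, rn]⟩
      · rintro x ⟨π, rfl⟩
        cases π
        simp [Vt, rn]
    | node r rs =>
      cases hne with
      | node hne1 hne2 =>
      -- basic facts
      have hchild : ∀ (i : Fin (r :: rs : List (ℝ × List (Mol M))).length)
          (j : Fin ((r :: rs).get i).2.length),
          sizeOf (((r :: rs).get i).2.get j) ≤ n ∧
          NonemptyRxns (((r :: rs).get i).2.get j) := by
        intro i j
        have hmemR : (r :: rs).get i ∈ (r :: rs : List _) := List.get_mem _ _
        have hmemu : ((r :: rs).get i).2.get j ∈ ((r :: rs).get i).2 := List.get_mem _ _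
        have := sizeOf_child_lt r rs _ hmemR _ hmemu
        exact ⟨by omega, hne2 _ hmemR _ hmemu⟩
      -- Vt of a step vs rnR
      have hVt : ∀ (i : Fin (r :: rs : List (ℝ × List (Mol M))).length)
          (j : Fin ((r :: rs).get i).2.length)
          (rest : FPos (((r :: rs).get i).2.get j)),
          Vt V (.step i j rest)
            = rnR V ((r :: rs).get i) + (Vt V rest - rn V (((r :: rs).get i).2.get j)) := by
        intro i j rest
        have hsum : (∑ j' ∈ Finset.univ.erase j, rn V (((r :: rs).get i).2.get j'))
            + rn V (((r :: rs).get i).2.get j)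
            = (((r :: rs).get i).2.map (rn V)).sum := by
          rw [Finset.sum_erase_add _ _ (Finset.mem_univ j)]
          exact sumFinGet _ _
        rw [rnR_eq]
        show ((r :: rs).get i).1
            + (∑ j' ∈ Finset.univ.erase j, rn V (((r :: rs).get i).2.get j')) + Vt V rest = _
        linarith [hsum]
      have hminmem := foldrMin_mem (rnR V r) (rs.map (rnR V))
      rw [← List.map_cons] at hminmem
      constructor
      · -- membership: pick minimizing reaction, first child
        obtain ⟨R, hRmem, hReq⟩ := List.mem_map.1 hminmem
        obtain ⟨i, hi⟩ := List.mem_iff_get.1 hRmem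
        have hnil := hne1 R hRmem
        have hlen : 0 < ((r :: rs).get i).2.length := by
          rw [hi]; exact List.length_pos_iff.2 hnil
        set j : Fin ((r :: rs).get i).2.length := ⟨0, hlen⟩
        obtain ⟨hsz, hne'⟩ := hchild i j
        obtain ⟨⟨rest, hrest⟩, _⟩ := ih _ hsz hne'
        refine ⟨.step i j rest, ?_⟩
        rw [hVt i j rest, hrest, rn_node, ← hReq]
        have hRe : rnR V ((r :: rs).get i) = rnR V R := by rw [hi]
        linarith
      · rintro x ⟨π, rfl⟩
        cases π with
        | step i j rest =>
          obtain ⟨hsz, hne'⟩ := hchild i j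
          have hlb := (ih _ hsz hne').2 ⟨rest, rfl⟩
          have hle : rn V (.node r rs) ≤ rnR V ((r :: rs).get i) := by
            rw [rn_node]
            exact foldrMin_le _ _ _ (by
              rw [← List.map_cons]
              exact List.mem_map.2 ⟨_, List.get_mem _ _, rfl⟩)
          rw [hVt i j rest]
          linarith

/-- if every reaction node of the tree has a nonempty list of
molecule children, then the minimum of `Vt V π` over all frontier positions `π`
is attained and equals the reaction number of the root, i.e. the frontier node
selected by Retro* attains exactly the minimum total cost over all synthesis
routes of the target. -/
theorem min_Vt_eq_rn_root {M : Type} (V : M → ℝ) (u : Mol M) (h : NonemptyRxns u) :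
    IsLeast {x : ℝ | ∃ π : FPos u, Vt V π = x} (rn V u) := by
  exact min_Vt_aux V (sizeOf u) u le_rfl h
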